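/- Let a and b be coprime odd integers with a ≥ 3 and b ≥ 3, and set d = a + b + 4. Suppose there exists a polynomial F ∈ ℂ[x_0,x_1,x_2,x_3] that is weighted homogeneous of degree d with respect to the weights (1,2,a,b) and whose partial derivatives ∂F/∂x_0,…,∂F/∂x_3 have no common zero in ℂ^4 other than the origin. Then the unordered pair {a,b} is one of {3,7} (with d = 14), {3,5} (with d = 12), {5,7} (with d = 16), or {7,11} (with d = 22). -/

import Mathlib

open MvPolynomial

lemma coeff_pderiv' {σ R : Type*} [DecidableEq σ] [CommRing R] (i : σ) (m : σ →₀ ℕ)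
    (F : MvPolynomial σ R) :
    coeff m (pderiv i F) = (m i + 1 : ℕ) * coeff (m + Finsupp.single i 1) F := by
  induction F using MvPolynomial.induction_on' with
  | monomial s a =>
    rw [pderiv_monomial, coeff_monomial, coeff_monomial]
    by_cases h : s = m + Finsupp.single i 1
    · subst h
      have h1 : m + Finsupp.single i 1 - Finsupp.single i 1 = m := by
        ext j
        simp only [Finsupp.tsub_apply, Finsupp.add_apply, Finsupp.single_apply]
        split <;> omega
      have h2 : ((m + Finsupp.single i 1 : _ →₀ ℕ)) i = m i + 1 := by simp
      rw [if_pos h1, h2, if_pos rfl]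
      push_cast; ring
    · rw [if_neg h]
      by_cases h0 : s i = 0
      · have hss : s - Finsupp.single i 1 = s := by
          ext j
          rcases eq_or_ne i j with rfl | hij
          · simp only [Finsupp.tsub_apply, Finsupp.single_apply, if_pos rfl]
            omega
          · simp [Finsupp.tsub_apply, Finsupp.single_apply, hij]
        rw [hss]
        by_cases hsm : s = m
        · subst hsm; simp [h0]
        · rw [if_neg hsm, mul_zero]
      · have hne : s - Finsupp.single i 1 ≠ m := by
          intro hc
          apply h
          ext j
          rw [← hc]
          rcases eq_or_ne i j with rfl | hij
          · simp only [Finsupp.add_apply, Finsupp.tsub_apply, Finsupp.single_apply, if_pos rfl,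
              if_true]
            omega
          · simp [Finsupp.add_apply, Finsupp.tsub_apply, Finsupp.single_apply, hij]
        rw [if_neg hne, mul_zero]
  | add p q hp hq =>
    simp [hp, hq, mul_add]

lemma exists_mono {w : Fin 4 → ℕ} {F : MvPolynomial (Fin 4) ℂ} {d : ℕ}
    (hF : F.IsWeightedHomogeneous w d)
    (hs : ∀ x : Fin 4 → ℂ, (∀ i, eval x (pderiv i F) = 0) → x = 0)
    (i0 : Fin 4) : ∃ i : Fin 4, w i ≤ d ∧ w i0 ∣ d - w i := by
  by_contra h
  push_neg at h
  set x : Fin 4 → ℂ := fun j => if j = i0 then 1 else 0 with hx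
  have hx0 : x = 0 := by
    apply hs
    intro i
    rw [eval_eq]
    apply Finset.sum_eq_zero
    intro m hm
    by_cases hcase : ∀ j, j ≠ i0 → m j = 0
    · exfalso
      rw [mem_support_iff] at hm
      rw [coeff_pderiv'] at hm
      have hc : coeff (m + Finsupp.single i 1) F ≠ 0 := by
        intro h0; rw [h0, mul_zero] at hm; exact hm rfl
      have hw := hF hc
      have hm' : m = Finsupp.single i0 (m i0) := by
        ext j
        rcases eq_or_ne j i0 with rfl | hj
        · simp
        · rw [hcase j hj, Finsupp.single_apply, if_neg (by exact fun hc => hj hc.symm)]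
      rw [map_add, hm'] at hw
      rw [Finsupp.weight_apply, Finsupp.weight_apply] at hw
      rw [Finsupp.sum_single_index (by simp), Finsupp.sum_single_index (by simp)] at hw
      have hw' : m i0 * w i0 + w i = d := by simpa using hw
      apply h i (by omega)
      have : d - w i = m i0 * w i0 := by omega
      rw [this]
      exact dvd_mul_left (w i0) (m i0)
    · push_neg at hcase
      obtain ⟨j, hj, hmj⟩ := hcase
      rw [mul_eq_zero]
      right
      apply Finset.prod_eq_zero (Finsupp.mem_support_iff.mpr hmj)
      rw [hx]
      simp only [if_neg hj]
      exact zero_pow hmj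
  have := congrFun hx0 i0
  simp [hx] at this

/-- Classification of quasi-smooth hypersurfaces of type `(a+b+4, [1,2,a,b])` with `a, b`
coprime odd integers: the unordered pair `{a,b}` is `{3,7}`, `{3,5}`, `{5,7}` or `{7,11}`. -/
theorem stmt6 (a b : ℕ) (ha : Odd a) (hb : Odd b) (hab : Nat.Coprime a b)
    (ha3 : 3 ≤ a) (hb3 : 3 ≤ b)
    (hF : ∃ F : MvPolynomial (Fin 4) ℂ,
      F.IsWeightedHomogeneous ![1, 2, a, b] (a + b + 4) ∧
      ∀ x : Fin 4 → ℂ, (∀ i, eval x (pderiv i F) = 0) → x = 0) :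
    ({a, b} : Finset ℕ) = {3, 7} ∨ ({a, b} : Finset ℕ) = {3, 5} ∨
      ({a, b} : Finset ℕ) = {5, 7} ∨ ({a, b} : Finset ℕ) = {7, 11} := by
  rw [Nat.odd_iff] at ha hb
  obtain ⟨F, hhom, hsmooth⟩ := hF
  have h2 := exists_mono hhom hsmooth 2
  have h3 := exists_mono hhom hsmooth 3
  have hA : a ∣ b + 2 ∨ a ∣ b + 3 ∨ a ∣ b + 4 := by
    obtain ⟨i, hle, hdvd⟩ := h2
    fin_cases i <;>
      simp only [Fin.zero_eta, Fin.mk_one, Fin.reduceFinMk, Matrix.cons_val_zero,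
        Matrix.cons_val_one, Matrix.head_cons, Matrix.cons_val_two, Matrix.tail_cons,
        Matrix.cons_val_three, Matrix.cons_val_fin_one] at hle hdvd
    · refine Or.inr (Or.inl ?_)
      have h : a + b + 4 - 1 = a + (b + 3) := by omega
      rw [h] at hdvd
      exact (Nat.dvd_add_right dvd_rfl).mp hdvd
    · refine Or.inl ?_
      have h : a + b + 4 - 2 = a + (b + 2) := by omega
      rw [h] at hdvd
      exact (Nat.dvd_add_right dvd_rfl).mp hdvd
    · refine Or.inr (Or.inr ?_)
      have h : a + b + 4 - a = b + 4 := by omega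
      rwa [h] at hdvd
    · exfalso
      have h : a + b + 4 - b = a + 4 := by omega
      rw [h] at hdvd
      have h4 : a ∣ 4 := (Nat.dvd_add_right dvd_rfl).mp hdvd
      have := Nat.le_of_dvd (by norm_num) h4
      interval_cases a <;> omega
  have hB : b ∣ a + 2 ∨ b ∣ a + 3 ∨ b ∣ a + 4 := by
    obtain ⟨i, hle, hdvd⟩ := h3
    fin_cases i <;>
      simp only [Fin.zero_eta, Fin.mk_one, Fin.reduceFinMk, Matrix.cons_val_zero,
        Matrix.cons_val_one, Matrix.head_cons, Matrix.cons_val_two, Matrix.tail_cons,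
        Matrix.cons_val_three, Matrix.cons_val_fin_one] at hle hdvd
    · refine Or.inr (Or.inl ?_)
      have h : a + b + 4 - 1 = b + (a + 3) := by omega
      rw [h] at hdvd
      exact (Nat.dvd_add_right dvd_rfl).mp hdvd
    · refine Or.inl ?_
      have h : a + b + 4 - 2 = b + (a + 2) := by omega
      rw [h] at hdvd
      exact (Nat.dvd_add_right dvd_rfl).mp hdvd
    · exfalso
      have h : a + b + 4 - a = b + 4 := by omega
      rw [h] at hdvd
      have h4 : b ∣ 4 := (Nat.dvd_add_right dvd_rfl).mp hdvd
      have := Nat.le_of_dvd (by norm_num) h4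
      interval_cases b <;> omega
    · refine Or.inr (Or.inr ?_)
      have h : a + b + 4 - b = a + 4 := by omega
      rwa [h] at hdvd
  clear h2 h3 hhom hsmooth
  -- extract uniform divisibilities with bounds
  obtain ⟨c, hc2, hc4, hcd⟩ : ∃ c, 2 ≤ c ∧ c ≤ 4 ∧ a ∣ b + c := by
    rcases hA with h | h | h
    exacts [⟨2, by omega, by omega, h⟩, ⟨3, by omega, by omega, h⟩, ⟨4, by omega, by omega, h⟩]
  obtain ⟨e, he2, he4, hed⟩ : ∃ e, 2 ≤ e ∧ e ≤ 4 ∧ b ∣ a + e := by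
    rcases hB with h | h | h
    exacts [⟨2, by omega, by omega, h⟩, ⟨3, by omega, by omega, h⟩, ⟨4, by omega, by omega, h⟩]
  have hab1 : a ≤ b + 4 := le_trans (Nat.le_of_dvd (by omega) hcd) (by omega)
  have hab2 : b ≤ a + 4 := le_trans (Nat.le_of_dvd (by omega) hed) (by omega)
  have hbound : a ≤ 11 ∧ b ≤ 11 := by
    obtain ⟨k, hk⟩ := hcd
    obtain ⟨l, hl⟩ := hed
    have hk3 : k ≤ 3 := by
      by_contra hk4
      have : a * 4 ≤ a * k := Nat.mul_le_mul_left a (by omega)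
      omega
    have hl3 : l ≤ 3 := by
      by_contra hl4
      have : b * 4 ≤ b * l := Nat.mul_le_mul_left b (by omega)
      omega
    interval_cases k <;> interval_cases l <;> omega
  obtain ⟨hA11, hB11⟩ := hbound
  interval_cases a <;> interval_cases b <;>
    first
      | omega
      | (revert hab; decide)
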